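/- In the Poisson random-intercept model, the squared score terms are correlated: Cov((Y₁e^{−b} − 1)², (Y₂e^{−b} − 1)²) = e^{σ²}(e^{σ²} − 1) ≠ 0. In particular, Y₁e^{−b} − 1 and Y₂e^{−b} − 1 are uncorrelated but not independent. -/

import Mathlib

open MeasureTheory ProbabilityTheory
open scoped NNReal
open Real
open scoped ENNReal

/-! ### Poisson moment sums -/

lemma pois_shift (r : ℝ≥0) (n : ℕ) :
    poissonPMFReal r (n + 1) * (n + 1) = r * poissonPMFReal r n := by
  have h0 : (Nat.factorial (n + 1) : ℝ) = (n + 1) * Nat.factorial n := by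
    rw [Nat.factorial_succ]; push_cast; ring
  have h1 : (Nat.factorial n : ℝ) ≠ 0 := Nat.cast_ne_zero.mpr (Nat.factorial_ne_zero n)
  simp only [poissonPMFReal, h0, pow_succ]
  field_simp

lemma pois_hasSum1 (r : ℝ≥0) :
    HasSum (fun n : ℕ => poissonPMFReal r n * n) (r : ℝ) := by
  refine (hasSum_nat_add_iff' 1).mp ?_
  have h := (show HasSum (fun n => poissonPMFReal r n) 1 from poissonPMFRealSum r).mul_left (r : ℝ)
  simp only [mul_one] at h
  convert h using 1
  · rfl
  · ext n
    push_cast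
    rw [pois_shift r n]
  · simp [poissonPMFReal]

lemma pois_hasSum2 (r : ℝ≥0) :
    HasSum (fun n : ℕ => poissonPMFReal r n * n ^ 2) ((r : ℝ) + r ^ 2) := by
  refine (hasSum_nat_add_iff' 1).mp ?_
  have h := ((pois_hasSum1 r).mul_left (r : ℝ)).add ((show HasSum (fun n => poissonPMFReal r n) 1 from poissonPMFRealSum r).mul_left (r : ℝ))
  simp only [mul_one] at h
  convert h using 1
  · rfl
  · ext n
    push_cast
    have : poissonPMFReal r (n + 1) * ((n : ℝ) + 1) ^ 2
        = (poissonPMFReal r (n + 1) * ((n : ℝ) + 1)) * ((n : ℝ) + 1) := by ring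
    rw [this, pois_shift r n]
    ring
  · simp [poissonPMFReal]
    ring

/-! ### Integration against the Poisson measure -/

lemma pois_integrable {r : ℝ≥0} {f g : ℕ → ℝ} (hfg : ∀ n, |f n| ≤ g n) {S : ℝ}
    (hS : HasSum (fun n => poissonPMFReal r n * g n) S) :
    Integrable f (poissonMeasure r) := by
  have hg0 : ∀ n, 0 ≤ g n := fun n => le_trans (abs_nonneg _) (hfg n)
  refine ⟨(measurable_of_countable f).aestronglyMeasurable, ?_⟩
  have hsingle : ∀ n : ℕ, poissonMeasure r {n} = ENNReal.ofReal (poissonPMFReal r n) := by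
    intro n
    rw [poissonMeasure_singleton]
    rfl
  have key : (∫⁻ n, (‖f n‖₊ : ℝ≥0∞) ∂(poissonMeasure r)) < ⊤ := by
    rw [lintegral_countable']
    calc ∑' n : ℕ, (‖f n‖₊ : ℝ≥0∞) * poissonMeasure r {n}
        ≤ ∑' n : ℕ, ENNReal.ofReal (poissonPMFReal r n * g n) := by
          refine ENNReal.tsum_le_tsum fun n => ?_
          rw [hsingle n, ← enorm_eq_nnnorm, Real.enorm_eq_ofReal_abs, ← ENNReal.ofReal_mul (abs_nonneg _)]
          refine ENNReal.ofReal_le_ofReal ?_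
          rw [mul_comm]
          exact mul_le_mul_of_nonneg_left (hfg n) poissonPMFReal_nonneg
      _ = ENNReal.ofReal S := by
          rw [← ENNReal.ofReal_tsum_of_nonneg (fun n => mul_nonneg poissonPMFReal_nonneg (hg0 n))
            hS.summable, hS.tsum_eq]
      _ < ⊤ := ENNReal.ofReal_lt_top
  exact key

lemma pois_integral {r : ℝ≥0} {f : ℕ → ℝ} (hf : Integrable f (poissonMeasure r)) {S : ℝ}
    (hS : HasSum (fun n => poissonPMFReal r n * f n) S) :
    ∫ n, f n ∂(poissonMeasure r) = S := by
  rw [integral_poissonMeasure' hf, ← hS.tsum_eq]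
  congr 1

lemma pois_hasSum_linear (r : ℝ≥0) (c d : ℝ) :
    HasSum (fun n : ℕ => poissonPMFReal r n * ((n : ℝ) * c + d)) ((r : ℝ) * c + d) := by
  have h := ((pois_hasSum1 r).mul_right c).add ((show HasSum (fun n => poissonPMFReal r n) 1 from poissonPMFRealSum r).mul_right d)
  rw [one_mul] at h
  convert h using 1
  rfl
  ext n
  ring

lemma pois_hasSum_sq (r : ℝ≥0) (c d : ℝ) :
    HasSum (fun n : ℕ => poissonPMFReal r n * ((n : ℝ) * c + d) ^ 2)
      (((r : ℝ) + (r : ℝ) ^ 2) * c ^ 2 + (r : ℝ) * (2 * c * d) + d ^ 2) := by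
  have h := (((pois_hasSum2 r).mul_right (c ^ 2)).add
    ((pois_hasSum1 r).mul_right (2 * c * d))).add ((show HasSum (fun n => poissonPMFReal r n) 1 from poissonPMFRealSum r).mul_right (d ^ 2))
  rw [one_mul] at h
  convert h using 1
  rfl
  ext n
  ring

lemma pois_integrable_linear (r : ℝ≥0) (c d : ℝ) :
    Integrable (fun n : ℕ => (n : ℝ) * c + d) (poissonMeasure r) := by
  refine pois_integrable (g := fun n : ℕ => (n : ℝ) * |c| + |d|) (fun n => ?_)
    (pois_hasSum_linear r |c| |d|)
  calc |(n : ℝ) * c + d| ≤ |(n : ℝ) * c| + |d| := abs_add_le _ _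
    _ = (n : ℝ) * |c| + |d| := by rw [abs_mul, Nat.abs_cast]

lemma pois_integrable_sq (r : ℝ≥0) (c d : ℝ) :
    Integrable (fun n : ℕ => ((n : ℝ) * c + d) ^ 2) (poissonMeasure r) := by
  refine pois_integrable (g := fun n : ℕ => ((n : ℝ) * c + d) ^ 2) (fun n => ?_)
    (pois_hasSum_sq r c d)
  rw [abs_of_nonneg (sq_nonneg _)]

lemma pois_integral_linear (r : ℝ≥0) (c d : ℝ) :
    ∫ n, ((n : ℝ) * c + d) ∂(poissonMeasure r) = (r : ℝ) * c + d :=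
  pois_integral (pois_integrable_linear r c d) (pois_hasSum_linear r c d)

lemma pois_integral_sq (r : ℝ≥0) (c d : ℝ) :
    ∫ n, ((n : ℝ) * c + d) ^ 2 ∂(poissonMeasure r)
      = ((r : ℝ) + (r : ℝ) ^ 2) * c ^ 2 + (r : ℝ) * (2 * c * d) + d ^ 2 :=
  pois_integral (pois_integrable_sq r c d) (pois_hasSum_sq r c d)

/-! ### Gaussian exponential moments -/

lemma gauss_pdf_mul (v : ℝ≥0) (hv : v ≠ 0) (t x : ℝ) :
    gaussianPDFReal 0 v x * rexp (t * x)
      = rexp ((v : ℝ) * t ^ 2 / 2) * gaussianPDFReal (t * v) v x := by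
  have hv' : (v : ℝ) ≠ 0 := by exact_mod_cast hv
  simp only [gaussianPDFReal]
  rw [mul_assoc, ← Real.exp_add]
  rw [show rexp ((v : ℝ) * t ^ 2 / 2) * ((√(2 * π * v))⁻¹ * rexp (-(x - t * v) ^ 2 / (2 * v)))
      = (√(2 * π * v))⁻¹ * (rexp ((v : ℝ) * t ^ 2 / 2) * rexp (-(x - t * v) ^ 2 / (2 * v))) by
        ring,
    ← Real.exp_add]
  congr 1
  field_simp
  ring

lemma gauss_density_eq (v : ℝ≥0) (hv : v ≠ 0) :
    gaussianReal 0 v = volume.withDensity fun x => ((gaussianPDFReal 0 v x).toNNReal : ℝ≥0∞) := by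
  rw [gaussianReal_of_var_ne_zero 0 hv]
  rfl

lemma gauss_exp_integrable (v : ℝ≥0) (hv : v ≠ 0) (t : ℝ) :
    Integrable (fun x => rexp (t * x)) (gaussianReal 0 v) := by
  rw [gauss_density_eq v hv,
    integrable_withDensity_iff_integrable_smul ((measurable_gaussianPDFReal 0 v).real_toNNReal)]
  have : (fun x => ((gaussianPDFReal 0 v x).toNNReal : ℝ≥0) • rexp (t * x))
      = fun x => rexp ((v : ℝ) * t ^ 2 / 2) * gaussianPDFReal (t * v) v x := by
    ext x
    rw [NNReal.smul_def, smul_eq_mul, Real.coe_toNNReal _ (gaussianPDFReal_nonneg 0 v x),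
      gauss_pdf_mul v hv t x]
  rw [this]
  exact (integrable_gaussianPDFReal (t * v) v).const_mul _

lemma gauss_exp_integral (v : ℝ≥0) (hv : v ≠ 0) (t : ℝ) :
    ∫ x, rexp (t * x) ∂(gaussianReal 0 v) = rexp ((v : ℝ) * t ^ 2 / 2) := by
  rw [gauss_density_eq v hv,
    integral_withDensity_eq_integral_smul ((measurable_gaussianPDFReal 0 v).real_toNNReal)]
  have : (fun x => ((gaussianPDFReal 0 v x).toNNReal : ℝ≥0) • rexp (t * x))
      = fun x => rexp ((v : ℝ) * t ^ 2 / 2) * gaussianPDFReal (t * v) v x := by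
    ext x
    rw [NNReal.smul_def, smul_eq_mul, Real.coe_toNNReal _ (gaussianPDFReal_nonneg 0 v x),
      gauss_pdf_mul v hv t x]
  rw [this, integral_const_mul, integral_gaussianPDFReal_eq_one (t * v) hv, mul_one]

/-! ### The law as a compProd -/

/-- The joint law ν on ℝ × ℕ × ℕ of (b, Y₁, Y₂) in the Poisson random-intercept
model: b ~ N(0, σ²) and, conditionally on b, Y₁ and Y₂ are independent Poisson
random variables with rate e^b; b is recorded in the first coordinate. -/
noncomputable def poissonRandomInterceptLaw (σ : ℝ) : Measure (ℝ × ℕ × ℕ) :=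
  (gaussianReal 0 (Real.toNNReal (σ ^ 2))).bind fun b =>
    (Measure.dirac b).prod
      ((poissonMeasure (Real.toNNReal (Real.exp b))).prod
        (poissonMeasure (Real.toNNReal (Real.exp b))))

noncomputable def poisKer : Kernel ℝ ℕ where
  toFun := fun b => poissonMeasure (Real.toNNReal (Real.exp b))
  measurable' := by
    refine Measure.measurable_of_measurable_coe _ fun s hs => ?_
    simp_rw [poissonMeasure, Measure.sum_apply _ hs, Measure.smul_apply, smul_eq_mul]
    refine Measurable.ennreal_tsum fun n => ?_
    refine Measurable.mul ?_ measurable_const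
    fun_prop

instance : IsMarkovKernel poisKer :=
  ⟨fun _ => by rw [show poisKer _ = poissonMeasure _ from rfl]; infer_instance⟩

lemma poisKer_apply (b : ℝ) : poisKer b = poissonMeasure (Real.toNNReal (Real.exp b)) := rfl

noncomputable def jointKer : Kernel ℝ (ℕ × ℕ) := poisKer ×ₖ poisKer

instance : IsMarkovKernel jointKer := by rw [jointKer]; infer_instance

lemma jointKer_apply (b : ℝ) :
    jointKer b = (poissonMeasure (Real.toNNReal (Real.exp b))).prod
      (poissonMeasure (Real.toNNReal (Real.exp b))) := by
  rw [jointKer, Kernel.prod_apply, poisKer_apply]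

lemma law_eq_compProd (σ : ℝ) :
    poissonRandomInterceptLaw σ = (gaussianReal 0 (Real.toNNReal (σ ^ 2))) ⊗ₘ jointKer := by
  have hmeas : Measurable fun b : ℝ =>
      (Measure.dirac b).prod ((poissonMeasure (Real.toNNReal (Real.exp b))).prod
        (poissonMeasure (Real.toNNReal (Real.exp b)))) := by
    have : (fun b : ℝ => (Measure.dirac b).prod
        ((poissonMeasure (Real.toNNReal (Real.exp b))).prod
          (poissonMeasure (Real.toNNReal (Real.exp b)))))
        = fun b => (Kernel.id ×ₖ jointKer) b := by
      ext1 b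
      rw [Kernel.prod_apply, Kernel.id_apply, jointKer_apply]
    rw [this]
    exact (Kernel.id ×ₖ jointKer).measurable
  ext s hs
  rw [poissonRandomInterceptLaw, Measure.bind_apply hs hmeas.aemeasurable, Measure.compProd_apply hs]
  refine lintegral_congr fun b => ?_
  rw [jointKer_apply, Measure.dirac_prod, Measure.map_apply measurable_prodMk_left hs]

/-! ### Per-`b` score integrals -/

lemma rc_one (b : ℝ) : ((Real.toNNReal (rexp b) : ℝ≥0) : ℝ) * rexp (-b) = 1 := by
  rw [Real.coe_toNNReal _ (Real.exp_nonneg b), ← Real.exp_add]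
  simp

lemma score_integrable1 (b : ℝ) :
    Integrable (fun n : ℕ => (n : ℝ) * rexp (-b) - 1)
      (poissonMeasure (Real.toNNReal (rexp b))) := by
  have := pois_integrable_linear (Real.toNNReal (rexp b)) (rexp (-b)) (-1)
  simpa [sub_eq_add_neg] using this

lemma score_integrable2 (b : ℝ) :
    Integrable (fun n : ℕ => ((n : ℝ) * rexp (-b) - 1) ^ 2)
      (poissonMeasure (Real.toNNReal (rexp b))) := by
  have := pois_integrable_sq (Real.toNNReal (rexp b)) (rexp (-b)) (-1)
  simpa [sub_eq_add_neg] using this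

lemma score_integrable_plus (b : ℝ) :
    Integrable (fun n : ℕ => ((n : ℝ) * rexp (-b) + 1) ^ 2)
      (poissonMeasure (Real.toNNReal (rexp b))) :=
  pois_integrable_sq (Real.toNNReal (rexp b)) (rexp (-b)) 1

lemma score_int1 (b : ℝ) :
    ∫ n, ((n : ℝ) * rexp (-b) - 1) ∂(poissonMeasure (Real.toNNReal (rexp b))) = 0 := by
  have h := pois_integral_linear (Real.toNNReal (rexp b)) (rexp (-b)) (-1)
  have h2 : (fun n : ℕ => (n : ℝ) * rexp (-b) + (-1)) = fun n : ℕ => (n : ℝ) * rexp (-b) - 1 := by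
    ext n; ring
  rw [h2] at h
  rw [h, rc_one b]
  ring

lemma score_int2 (b : ℝ) :
    ∫ n, ((n : ℝ) * rexp (-b) - 1) ^ 2 ∂(poissonMeasure (Real.toNNReal (rexp b)))
      = rexp (-b) := by
  have h := pois_integral_sq (Real.toNNReal (rexp b)) (rexp (-b)) (-1)
  have h2 : (fun n : ℕ => ((n : ℝ) * rexp (-b) + (-1)) ^ 2)
      = fun n : ℕ => ((n : ℝ) * rexp (-b) - 1) ^ 2 := by
    ext n; ring
  rw [h2] at h
  rw [h]
  have hrc := rc_one b
  set R : ℝ := ((Real.toNNReal (rexp b) : ℝ≥0) : ℝ)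
  set c : ℝ := rexp (-b)
  linear_combination (c + R * c - 1) * hrc

lemma score_int_plus (b : ℝ) :
    ∫ n, ((n : ℝ) * rexp (-b) + 1) ^ 2 ∂(poissonMeasure (Real.toNNReal (rexp b)))
      = rexp (-b) + 4 := by
  rw [pois_integral_sq (Real.toNNReal (rexp b)) (rexp (-b)) 1]
  have hrc := rc_one b
  set R : ℝ := ((Real.toNNReal (rexp b) : ℝ≥0) : ℝ)
  set c : ℝ := rexp (-b)
  linear_combination (c + R * c + 3) * hrc

/-! ### Inner (joint kernel) integrals -/

lemma inner_f1 (b : ℝ) :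
    ∫ y : ℕ × ℕ, ((y.1 : ℝ) * rexp (-b) - 1) ∂(jointKer b) = 0 := by
  rw [jointKer_apply]
  have h := integral_prod_mul (μ := poissonMeasure (Real.toNNReal (rexp b)))
    (ν := poissonMeasure (Real.toNNReal (rexp b)))
    (f := fun n : ℕ => (n : ℝ) * rexp (-b) - 1) (g := fun _ : ℕ => (1 : ℝ))
  simpa [score_int1 b] using h

lemma inner_f2 (b : ℝ) :
    ∫ y : ℕ × ℕ, ((y.2 : ℝ) * rexp (-b) - 1) ∂(jointKer b) = 0 := by
  rw [jointKer_apply]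
  have h := integral_prod_mul (μ := poissonMeasure (Real.toNNReal (rexp b)))
    (ν := poissonMeasure (Real.toNNReal (rexp b)))
    (f := fun _ : ℕ => (1 : ℝ)) (g := fun n : ℕ => (n : ℝ) * rexp (-b) - 1)
  simpa [score_int1 b] using h

lemma inner_sq1 (b : ℝ) :
    ∫ y : ℕ × ℕ, ((y.1 : ℝ) * rexp (-b) - 1) ^ 2 ∂(jointKer b) = rexp (-b) := by
  rw [jointKer_apply]
  have h := integral_prod_mul (μ := poissonMeasure (Real.toNNReal (rexp b)))
    (ν := poissonMeasure (Real.toNNReal (rexp b)))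
    (f := fun n : ℕ => ((n : ℝ) * rexp (-b) - 1) ^ 2) (g := fun _ : ℕ => (1 : ℝ))
  simpa [score_int2 b] using h

lemma inner_sq2 (b : ℝ) :
    ∫ y : ℕ × ℕ, ((y.2 : ℝ) * rexp (-b) - 1) ^ 2 ∂(jointKer b) = rexp (-b) := by
  rw [jointKer_apply]
  have h := integral_prod_mul (μ := poissonMeasure (Real.toNNReal (rexp b)))
    (ν := poissonMeasure (Real.toNNReal (rexp b)))
    (f := fun _ : ℕ => (1 : ℝ)) (g := fun n : ℕ => ((n : ℝ) * rexp (-b) - 1) ^ 2)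
  simpa [score_int2 b] using h

lemma inner_cross (b : ℝ) :
    ∫ y : ℕ × ℕ, (((y.1 : ℝ) * rexp (-b) - 1) * ((y.2 : ℝ) * rexp (-b) - 1)) ∂(jointKer b)
      = 0 := by
  rw [jointKer_apply]
  have h := integral_prod_mul (μ := poissonMeasure (Real.toNNReal (rexp b)))
    (ν := poissonMeasure (Real.toNNReal (rexp b)))
    (f := fun n : ℕ => (n : ℝ) * rexp (-b) - 1) (g := fun n : ℕ => (n : ℝ) * rexp (-b) - 1)
  simpa [score_int1 b] using h

lemma inner_prod_sq (b : ℝ) :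
    ∫ y : ℕ × ℕ, (((y.1 : ℝ) * rexp (-b) - 1) ^ 2 * ((y.2 : ℝ) * rexp (-b) - 1) ^ 2)
      ∂(jointKer b) = rexp (-b) * rexp (-b) := by
  rw [jointKer_apply]
  have h := integral_prod_mul (μ := poissonMeasure (Real.toNNReal (rexp b)))
    (ν := poissonMeasure (Real.toNNReal (rexp b)))
    (f := fun n : ℕ => ((n : ℝ) * rexp (-b) - 1) ^ 2)
    (g := fun n : ℕ => ((n : ℝ) * rexp (-b) - 1) ^ 2)
  simpa [score_int2 b] using h

/-! ### The dominating function -/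

noncomputable def domF : ℝ × ℕ × ℕ → ℝ := fun x =>
  1 + (((x.2.1 : ℝ) * rexp (-x.1) + 1) * ((x.2.2 : ℝ) * rexp (-x.1) + 1)) ^ 2

lemma domF_nonneg (x : ℝ × ℕ × ℕ) : 0 ≤ domF x := by
  unfold domF; positivity

lemma measurable_cast1 : Measurable fun x : ℝ × ℕ × ℕ => (x.2.1 : ℝ) :=
  (measurable_of_countable (fun n : ℕ => (n : ℝ))).comp (measurable_fst.comp measurable_snd)

lemma measurable_cast2 : Measurable fun x : ℝ × ℕ × ℕ => (x.2.2 : ℝ) :=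
  (measurable_of_countable (fun n : ℕ => (n : ℝ))).comp (measurable_snd.comp measurable_snd)

lemma measurable_expneg : Measurable fun x : ℝ × ℕ × ℕ => rexp (-x.1) :=
  (Real.measurable_exp.comp measurable_neg).comp measurable_fst

lemma measurable_score1 : Measurable fun x : ℝ × ℕ × ℕ => (x.2.1 : ℝ) * rexp (-x.1) - 1 :=
  (measurable_cast1.mul measurable_expneg).sub measurable_const

lemma measurable_score2 : Measurable fun x : ℝ × ℕ × ℕ => (x.2.2 : ℝ) * rexp (-x.1) - 1 :=
  (measurable_cast2.mul measurable_expneg).sub measurable_const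

lemma measurable_domF : Measurable domF :=
  measurable_const.add
    ((((measurable_cast1.mul measurable_expneg).add measurable_const).mul
      ((measurable_cast2.mul measurable_expneg).add measurable_const)).pow_const 2)

lemma inner_dom_integrable (b : ℝ) :
    Integrable (fun y : ℕ × ℕ => domF (b, y)) (jointKer b) := by
  rw [jointKer_apply]
  have e : (fun y : ℕ × ℕ => domF (b, y))
      = fun y : ℕ × ℕ => (1 : ℝ) + ((y.1 : ℝ) * rexp (-b) + 1) ^ 2
        * ((y.2 : ℝ) * rexp (-b) + 1) ^ 2 := by
    ext y; unfold domF; ring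
  rw [e]
  exact (integrable_const 1).add ((score_integrable_plus b).mul_prod (score_integrable_plus b))

lemma inner_dom_val (b : ℝ) :
    ∫ y : ℕ × ℕ, ‖domF (b, y)‖ ∂(jointKer b)
      = rexp ((-2) * b) + 8 * rexp ((-1) * b) + 17 := by
  have e : (fun y : ℕ × ℕ => ‖domF (b, y)‖)
      = fun y : ℕ × ℕ => (1 : ℝ) + ((y.1 : ℝ) * rexp (-b) + 1) ^ 2
        * ((y.2 : ℝ) * rexp (-b) + 1) ^ 2 := by
    ext y
    rw [Real.norm_of_nonneg (domF_nonneg _)]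
    unfold domF; ring
  rw [e, jointKer_apply]
  rw [integral_add (integrable_const 1)
    ((score_integrable_plus b).mul_prod (score_integrable_plus b)), integral_const]
  have h := integral_prod_mul (μ := poissonMeasure (Real.toNNReal (rexp b)))
    (ν := poissonMeasure (Real.toNNReal (rexp b)))
    (f := fun n : ℕ => ((n : ℝ) * rexp (-b) + 1) ^ 2)
    (g := fun n : ℕ => ((n : ℝ) * rexp (-b) + 1) ^ 2)
  rw [h, score_int_plus b]
  have h2 : rexp ((-2) * b) = rexp (-b) * rexp (-b) := by
    rw [← Real.exp_add]; ring_nf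
  have h3 : rexp ((-1) * b) = rexp (-b) := by ring_nf
  rw [h2, h3]
  simp
  ring

lemma dom_ineqs (a c : ℝ) (ha : 0 ≤ a) (hc : 0 ≤ c) :
    |a - 1| ≤ 1 + ((a + 1) * (c + 1)) ^ 2 ∧ (a - 1) ^ 2 ≤ 1 + ((a + 1) * (c + 1)) ^ 2 ∧
    |(a - 1) * (c - 1)| ≤ 1 + ((a + 1) * (c + 1)) ^ 2 ∧
    (a - 1) ^ 2 * (c - 1) ^ 2 ≤ 1 + ((a + 1) * (c + 1)) ^ 2 := by
  have habs1 : |a - 1| ≤ a + 1 := by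
    rw [abs_le]; constructor <;> linarith
  have habs2 : |c - 1| ≤ c + 1 := by
    rw [abs_le]; constructor <;> linarith
  have hX : 0 ≤ (a + 1) * (c + 1) := by positivity
  have hXle : (a + 1) * (c + 1) ≤ 1 + ((a + 1) * (c + 1)) ^ 2 := by
    nlinarith [sq_nonneg ((a + 1) * (c + 1) - 1)]
  have hAX : a + 1 ≤ (a + 1) * (c + 1) := by nlinarith
  have e1 : (a - 1) ^ 2 ≤ (a + 1) ^ 2 := by nlinarith
  have e2 : (c - 1) ^ 2 ≤ (c + 1) ^ 2 := by nlinarith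
  refine ⟨by linarith [le_trans habs1 hAX], ?_, ?_, ?_⟩
  · nlinarith [sq_nonneg ((a + 1) * (c + 1))]
  · rw [abs_mul]
    have := mul_le_mul habs1 habs2 (abs_nonneg _) (by linarith)
    linarith
  · have t1 : (a - 1) ^ 2 * (c - 1) ^ 2 ≤ (a + 1) ^ 2 * (c + 1) ^ 2 := by
      have u1 : (a - 1) ^ 2 * (c - 1) ^ 2 ≤ (a + 1) ^ 2 * (c - 1) ^ 2 :=
        mul_le_mul_of_nonneg_right e1 (sq_nonneg _)
      have u2 : (a + 1) ^ 2 * (c - 1) ^ 2 ≤ (a + 1) ^ 2 * (c + 1) ^ 2 :=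
        mul_le_mul_of_nonneg_left e2 (sq_nonneg _)
      linarith
    have : ((a + 1) * (c + 1)) ^ 2 = (a + 1) ^ 2 * (c + 1) ^ 2 := mul_pow _ _ _
    linarith


/-- in the Poisson random-intercept model the squared score terms
are correlated, Cov((Y₁e^{−b}−1)², (Y₂e^{−b}−1)²) = e^{σ²}(e^{σ²}−1) ≠ 0; in
particular Y₁e^{−b}−1 and Y₂e^{−b}−1 are uncorrelated but not independent. -/
theorem poisson_random_intercept_squared_scores_correlated (σ : ℝ) (hσ : 0 < σ) :
    let ν := poissonRandomInterceptLaw σ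
    let f : ℝ × ℕ × ℕ → ℝ := fun x => (x.2.1 : ℝ) * Real.exp (-x.1) - 1
    let g : ℝ × ℕ × ℕ → ℝ := fun x => (x.2.2 : ℝ) * Real.exp (-x.1) - 1
    ((∫ x, f x ^ 2 * g x ^ 2 ∂ν) - (∫ x, f x ^ 2 ∂ν) * (∫ x, g x ^ 2 ∂ν)
        = Real.exp (σ ^ 2) * (Real.exp (σ ^ 2) - 1)) ∧
    Real.exp (σ ^ 2) * (Real.exp (σ ^ 2) - 1) ≠ 0 ∧
    ((∫ x, f x * g x ∂ν) - (∫ x, f x ∂ν) * (∫ x, g x ∂ν) = 0) ∧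
    ¬ IndepFun f g ν := by
  intro ν f g
  have hσ2 : (0 : ℝ) < σ ^ 2 := by positivity
  set v : ℝ≥0 := Real.toNNReal (σ ^ 2) with hvdef
  have hv : v ≠ 0 := by
    simp only [hvdef, ne_eq, Real.toNNReal_eq_zero, not_le]
    exact hσ2
  have hvcoe : (v : ℝ) = σ ^ 2 := Real.coe_toNNReal _ hσ2.le
  have hν : ν = gaussianReal 0 v ⊗ₘ jointKer := law_eq_compProd σ
  set ν' : Measure (ℝ × ℕ × ℕ) := gaussianReal 0 v ⊗ₘ jointKer with hν'def
  -- integrability of the dominating function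
  have hDint : Integrable domF ν' := by
    rw [hν'def]
    refine (Measure.integrable_compProd_iff measurable_domF.aestronglyMeasurable).mpr ⟨?_, ?_⟩
    · exact ae_of_all _ fun b => inner_dom_integrable b
    · have e : (fun b => ∫ y, ‖domF (b, y)‖ ∂jointKer b)
          = fun b => rexp ((-2) * b) + 8 * rexp ((-1) * b) + 17 :=
        funext fun b => inner_dom_val b
      rw [e]
      exact ((gauss_exp_integrable v hv (-2)).add
        ((gauss_exp_integrable v hv (-1)).const_mul 8)).add (integrable_const 17)
  -- pointwise bounds
  have bnds : ∀ x : ℝ × ℕ × ℕ,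
      |(x.2.1 : ℝ) * rexp (-x.1) - 1| ≤ domF x ∧
      ((x.2.1 : ℝ) * rexp (-x.1) - 1) ^ 2 ≤ domF x ∧
      |((x.2.1 : ℝ) * rexp (-x.1) - 1) * ((x.2.2 : ℝ) * rexp (-x.1) - 1)| ≤ domF x ∧
      ((x.2.1 : ℝ) * rexp (-x.1) - 1) ^ 2 * ((x.2.2 : ℝ) * rexp (-x.1) - 1) ^ 2 ≤ domF x :=
    fun x => dom_ineqs ((x.2.1 : ℝ) * rexp (-x.1)) ((x.2.2 : ℝ) * rexp (-x.1))
      (by positivity) (by positivity)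
  have hnormD : ∀ x : ℝ × ℕ × ℕ, ‖domF x‖ = domF x := fun x =>
    Real.norm_of_nonneg (domF_nonneg x)
  -- integrability of the four integrands
  have hIf : Integrable f ν' := by
    refine hDint.mono measurable_score1.aestronglyMeasurable (ae_of_all _ fun x => ?_)
    rw [hnormD x]
    exact (bnds x).1
  have hIg : Integrable g ν' := by
    refine hDint.mono measurable_score2.aestronglyMeasurable (ae_of_all _ fun x => ?_)
    rw [hnormD x, Real.norm_eq_abs]
    have := dom_ineqs ((x.2.2 : ℝ) * rexp (-x.1)) ((x.2.1 : ℝ) * rexp (-x.1))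
      (by positivity) (by positivity)
    calc |(x.2.2 : ℝ) * rexp (-x.1) - 1|
        ≤ 1 + (((x.2.2 : ℝ) * rexp (-x.1) + 1) * ((x.2.1 : ℝ) * rexp (-x.1) + 1)) ^ 2 := this.1
      _ = domF x := by unfold domF; ring
  have hIf2 : Integrable (fun x => f x ^ 2) ν' := by
    refine hDint.mono (measurable_score1.pow_const 2).aestronglyMeasurable
      (ae_of_all _ fun x => ?_)
    rw [hnormD x, Real.norm_eq_abs, abs_of_nonneg (sq_nonneg _)]
    exact (bnds x).2.1
  have hIg2 : Integrable (fun x => g x ^ 2) ν' := by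
    refine hDint.mono (measurable_score2.pow_const 2).aestronglyMeasurable
      (ae_of_all _ fun x => ?_)
    rw [hnormD x, Real.norm_eq_abs, abs_of_nonneg (sq_nonneg _)]
    have := dom_ineqs ((x.2.2 : ℝ) * rexp (-x.1)) ((x.2.1 : ℝ) * rexp (-x.1))
      (by positivity) (by positivity)
    calc ((x.2.2 : ℝ) * rexp (-x.1) - 1) ^ 2
        ≤ 1 + (((x.2.2 : ℝ) * rexp (-x.1) + 1) * ((x.2.1 : ℝ) * rexp (-x.1) + 1)) ^ 2 := this.2.1
      _ = domF x := by unfold domF; ring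
  have hIfg : Integrable (fun x => f x * g x) ν' := by
    refine hDint.mono (measurable_score1.mul measurable_score2).aestronglyMeasurable
      (ae_of_all _ fun x => ?_)
    rw [hnormD x]
    exact (bnds x).2.2.1
  have hIf4 : Integrable (fun x => f x ^ 2 * g x ^ 2) ν' := by
    refine hDint.mono ((measurable_score1.pow_const 2).mul
      (measurable_score2.pow_const 2)).aestronglyMeasurable (ae_of_all _ fun x => ?_)
    rw [hnormD x, Real.norm_eq_abs, abs_of_nonneg (by positivity)]
    exact (bnds x).2.2.2
  -- the six integrals
  have hEf : ∫ x, f x ∂ν' = 0 := by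
    rw [hν'def, Measure.integral_compProd (hν'def ▸ hIf)]
    rw [show (fun a => ∫ y, f (a, y) ∂jointKer a) = fun _ => (0 : ℝ) from
      funext fun b => inner_f1 b]
    simp
  have hEg : ∫ x, g x ∂ν' = 0 := by
    rw [hν'def, Measure.integral_compProd (hν'def ▸ hIg)]
    rw [show (fun a => ∫ y, g (a, y) ∂jointKer a) = fun _ => (0 : ℝ) from
      funext fun b => inner_f2 b]
    simp
  have hEf2 : ∫ x, f x ^ 2 ∂ν' = rexp (σ ^ 2 / 2) := by
    rw [hν'def, Measure.integral_compProd (hν'def ▸ hIf2)]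
    rw [show (fun a => ∫ y, f (a, y) ^ 2 ∂jointKer a) = fun b => rexp ((-1) * b) from
      funext fun b => by rw [show ((-1 : ℝ)) * b = -b by ring]; exact inner_sq1 b]
    rw [gauss_exp_integral v hv (-1), hvcoe]
    norm_num
  have hEg2 : ∫ x, g x ^ 2 ∂ν' = rexp (σ ^ 2 / 2) := by
    rw [hν'def, Measure.integral_compProd (hν'def ▸ hIg2)]
    rw [show (fun a => ∫ y, g (a, y) ^ 2 ∂jointKer a) = fun b => rexp ((-1) * b) from
      funext fun b => by rw [show ((-1 : ℝ)) * b = -b by ring]; exact inner_sq2 b]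
    rw [gauss_exp_integral v hv (-1), hvcoe]
    norm_num
  have hEfg : ∫ x, f x * g x ∂ν' = 0 := by
    rw [hν'def, Measure.integral_compProd (hν'def ▸ hIfg)]
    rw [show (fun a => ∫ y, f (a, y) * g (a, y) ∂jointKer a) = fun _ => (0 : ℝ) from
      funext fun b => inner_cross b]
    simp
  have hEf4 : ∫ x, f x ^ 2 * g x ^ 2 ∂ν' = rexp (σ ^ 2) * rexp (σ ^ 2) := by
    rw [hν'def, Measure.integral_compProd (hν'def ▸ hIf4)]
    rw [show (fun a => ∫ y, f (a, y) ^ 2 * g (a, y) ^ 2 ∂jointKer a)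
        = fun b => rexp ((-2) * b) from funext fun b => by
      rw [show rexp ((-2 : ℝ) * b) = rexp (-b) * rexp (-b) by rw [← Real.exp_add]; ring_nf]
      exact inner_prod_sq b]
    rw [gauss_exp_integral v hv (-2), hvcoe, ← Real.exp_add]
    norm_num
    ring_nf
  have hexp1 : 1 < rexp (σ ^ 2) := by
    rw [← Real.exp_zero]
    exact Real.exp_lt_exp.mpr hσ2
  refine ⟨?_, ?_, ?_, ?_⟩
  · rw [hν, hEf4, hEf2, hEg2, ← Real.exp_add, mul_sub, mul_one, ← Real.exp_add]
    norm_num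
    rw [Real.exp_add]
  · exact mul_ne_zero (Real.exp_ne_zero _) (sub_ne_zero.mpr (ne_of_gt hexp1))
  · rw [hν, hEfg, hEf, hEg]
    ring
  · intro hind
    have hind2 : IndepFun (fun x => f x ^ 2) (fun x => g x ^ 2) ν :=
      hind.comp (measurable_id.pow_const 2) (measurable_id.pow_const 2)
    have key : ∫ x, f x ^ 2 * g x ^ 2 ∂ν = (∫ x, f x ^ 2 ∂ν) * ∫ x, g x ^ 2 ∂ν :=
      hind2.integral_fun_mul_eq_mul_integral (hν ▸ hIf2).aestronglyMeasurable
        (hν ▸ hIg2).aestronglyMeasurable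
    rw [hν, hEf4, hEf2, hEg2, ← Real.exp_add, ← Real.exp_add] at key
    have := Real.exp_eq_exp.mp key
    nlinarith
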